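/- Let H be a free C[η]-module of finite rank with a connection ∇ having a pole of order at most two at η = 0 and no other pole. Let m ∈ H and let b(η∂_η)m = η P(η, η∂_η)m be the minimal monic differential equation satisfied by m, with b ∈ C[s] nonzero and P a polynomial operator. If, after the rescaling substitution η = τ'z, the operator ∏_β (τ'∂_{τ'} - βz)^{ν_β} - z^{deg b}(τ'z) P(τ'z, z^{-1}τ'∂_{τ'}) has coefficients without poles in z, then the Newton polygon of b(η∂_η) - ηP(η, η∂_η) has only slopes 0 and 1. -/
import Mathlib


/-- Let `H` be a free `ℂ[η]`-module with a connection having a pole of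
order at most two at `η = 0` and no other pole, `m ∈ H`, and let
`b(η∂_η)m = η P(η, η∂_η)m` be the minimal equation of `m`.  Write the operator
`b(η∂_η) - ηP(η, η∂_η) = ∑ a_{i,j} η^i (η∂_η)^j` (so `a_{0,j} = coeff_j b` and
`a_{i+1,j} = -P_{i,j}`).  A slope `s > 0` of its Newton polygon means that the minimum
of `i - j·s` over the support of `a` is attained at two distinct points.  The pole
order ≤ 2 hypothesis gives Katz invariant ≤ 1: no slope `s > 1` occurs.  If after the
rescaling substitution `η = τ'z` the operator
`∏_β (τ'∂_{τ'} - βz)^{ν_β} - z^{deg b}(τ'z)P(τ'z, z⁻¹τ'∂_{τ'})` has no poles in `z`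
(its monomial `a_{i,j} τ'^i z^{deg b + i - j} (τ'∂_{τ'})^j` has `j ≤ i + deg b`
whenever `a_{i,j} ≠ 0`), then the Newton polygon has only slopes `0` and `1`: every
slope `s > 0` equals `1`. -/
theorem stmt_15 (b : Polynomial ℂ) (hb : b ≠ 0)
    (P : ℕ → ℕ → ℂ) (a : ℕ → ℕ → ℂ)
    (hfin : {ij : ℕ × ℕ | a ij.1 ij.2 ≠ 0}.Finite)
    (hb0 : ∀ j : ℕ, a 0 j = b.coeff j)
    (hP : ∀ i j : ℕ, a (i + 1) j = -P i j)
    (hKatz : ∀ s : ℝ, 1 < s →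
      ¬ ∃ i j i' j' : ℕ, (i, j) ≠ (i', j') ∧ a i j ≠ 0 ∧ a i' j' ≠ 0 ∧
          (i : ℝ) - j * s = (i' : ℝ) - j' * s ∧
          ∀ i'' j'' : ℕ, a i'' j'' ≠ 0 → (i : ℝ) - j * s ≤ (i'' : ℝ) - j'' * s)
    (hnopole : ∀ i j : ℕ, a i j ≠ 0 → (j : ℤ) ≤ (i : ℤ) + (b.natDegree : ℤ)) :
    ∀ s : ℝ, 0 < s →
      (∃ i j i' j' : ℕ, (i, j) ≠ (i', j') ∧ a i j ≠ 0 ∧ a i' j' ≠ 0 ∧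
          (i : ℝ) - j * s = (i' : ℝ) - j' * s ∧
          ∀ i'' j'' : ℕ, a i'' j'' ≠ 0 → (i : ℝ) - j * s ≤ (i'' : ℝ) - j'' * s) →
      s = 1 := by

  intro s hs hex
  by_contra hne
  rcases lt_or_gt_of_ne hne with hlt | hgt
  · -- 0 < s < 1 : use hnopole and the leading coefficient of b
    obtain ⟨i, j, i', j', hij, ha, ha', heq, hmin⟩ := hex
    set d := b.natDegree with hd
    have had : a 0 d ≠ 0 := by
      rw [hb0]; exact Polynomial.leadingCoeff_ne_zero.mpr hb
    have hled : (0 : ℝ) - (d : ℝ) * s = -(d : ℝ) * s := by ring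
    -- key: for any point (i,j) in the support attaining the min, i = 0 and j = d
    have key : ∀ p q : ℕ, a p q ≠ 0 → (p : ℝ) - q * s ≤ (0 : ℝ) - (d : ℝ) * s →
        p = 0 ∧ q = d := by
      intro p q hpq hle
      have hpole : (q : ℤ) ≤ (p : ℤ) + d := hnopole p q hpq
      have hpoleR : (q : ℝ) ≤ (p : ℝ) + d := by exact_mod_cast hpole
      have h1 : (p : ℝ) - q * s ≥ (p : ℝ) * (1 - s) - d * s := by nlinarith
      have hp0 : p = 0 := by
        by_contra hp
        have hp1 : (1 : ℝ) ≤ (p : ℝ) := by exact_mod_cast Nat.one_le_iff_ne_zero.mpr hp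
        nlinarith
      subst hp0
      constructor
      · rfl
      · have : (q : ℝ) * s = (d : ℝ) * s := by
          have h2 : (q : ℝ) ≤ (d : ℝ) := by simpa using hpoleR
          nlinarith
        have := mul_right_cancel₀ (ne_of_gt hs) this
        exact_mod_cast this
    have hle1 : (i : ℝ) - j * s ≤ (0 : ℝ) - (d : ℝ) * s := by simpa using hmin 0 d had
    have hle2 : (i' : ℝ) - j' * s ≤ (0 : ℝ) - (d : ℝ) * s := heq ▸ hle1
    obtain ⟨e1, e2⟩ := key i j ha hle1
    obtain ⟨e3, e4⟩ := key i' j' ha' hle2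
    exact hij (by rw [e1, e2, e3, e4])
  · exact hKatz s hgt hex
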